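/- Let K be a number field, K̄ an algebraic closure of K, and O_K̄ the integral closure of O_K in K̄. Let W^a := W^a_{O_K}(O_K̄) denote the set of automatic elements of W_{O_K}(O_K̄). Then W^a is an O_K-subalgebra of W_{O_K}(O_K̄) (it contains all constant vectors and is closed under addition and multiplication), it is closed under all shift operators ψ_p, and moreover for every ζ ∈ W^a and every p ∈ P_K one has ψ_p ζ − ζ^{#k_p} ∈ p·W^a. In other words, the automatic Witt vectors form a sub-Λ-ring of W_{O_K}(O_K̄). -/

import Mathlib

open NumberField

noncomputable section

/-- The multiplicative monoid `I_K` of nonzero ideals of the ring of integers of `K`. -/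
def IdealMonoid (K : Type) [Field K] [NumberField K] : Submonoid (Ideal (𝓞 K)) where
  carrier := {I | I ≠ ⊥}
  mul_mem' := by
    intro a b ha hb h
    rcases Ideal.mul_eq_bot.mp h with h' | h'
    · exact ha h'
    · exact hb h'
  one_mem' := by
    simp only [Set.mem_setOf_eq, Ideal.one_eq_top]
    exact top_ne_bot

/-- `I_K`, the monoid of nonzero ideals, as a type. -/
abbrev IK (K : Type) [Field K] [NumberField K] := ↥(IdealMonoid K)

/-- `P_K`, the set of nonzero prime ideals of `𝓞 K`, as a type. -/
def PrimeIdeal (K : Type) [Field K] [NumberField K] :=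
  {p : Ideal (𝓞 K) // p.IsPrime ∧ p ≠ ⊥}

/-- A nonzero prime ideal, regarded as an element of `I_K`. -/
def PrimeIdeal.toIK {K : Type} [Field K] [NumberField K] (p : PrimeIdeal K) : IK K :=
  ⟨p.1, p.2.2⟩

/-- `#k_p`: the cardinality of the residue ring `R ⧸ p`. -/
def residueCard {R : Type} [CommRing R] (p : Ideal R) : ℕ :=
  Nat.card (R ⧸ p)

/-- The shift operator `ψ_a` on `A^{I_K}`: `(ψ_a ξ)_b = ξ_{a·b}`. -/
def shift {K : Type} [Field K] [NumberField K] {A : Type} (a : IK K)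
    (ξ : IK K → A) : IK K → A :=
  fun b => ξ (a * b)

/-- For an ideal `p` of `𝓞 K` and a subset `S ⊆ A^{I_K}`, the set `p·S` of all finite
sums of products of elements of `p` with elements of (the module generated by) `S`. -/
def idealMulSet {K : Type} [Field K] [NumberField K] {A : Type} [CommRing A]
    [Algebra (𝓞 K) A] (p : Ideal (𝓞 K)) (S : Set (IK K → A)) : Set (IK K → A) :=
  ↑(p • Submodule.span (𝓞 K) S)

/-- The descending chain `U_n(A)` of subsets of `A^{I_K}`. -/
def UnSet (K : Type) [Field K] [NumberField K] (A : Type) [CommRing A]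
    [Algebra (𝓞 K) A] : ℕ → Set (IK K → A)
  | 0 => Set.univ
  | n + 1 => {ξ | ξ ∈ UnSet K A n ∧ ∀ p : PrimeIdeal K,
      shift p.toIK ξ - ξ ^ residueCard p.1 ∈ idealMulSet p.1 (UnSet K A n)}

/-- The ring of Witt vectors `W_{O_K}(A) = ⋂ₙ U_n(A)`, as a subset of `A^{I_K}`. -/
def WittSet (K : Type) [Field K] [NumberField K] (A : Type) [CommRing A]
    [Algebra (𝓞 K) A] : Set (IK K → A) :=
  ⋂ n, UnSet K A n

/-- A deterministic finite automaton with output, over input alphabet `Δ` and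
output alphabet `O`. -/
structure DFAO (Δ O : Type) : Type 1 where
  State : Type
  [finState : Finite State]
  trans : State → Δ → State
  start : State
  out : State → O

/-- The output of a DFAO on an input word, processing letters from left to right. -/
def DFAO.output {Δ O : Type} (M : DFAO Δ O) (l : List Δ) : O :=
  M.out (l.foldl M.trans M.start)

/-- `ξ ∈ A^{I_K}` is automatic if some DFAO with input alphabet `P_K` and output
alphabet `A` produces `ξ_a` from every word of primes whose product is `a`. -/
def IsAutomatic {K : Type} [Field K] [NumberField K] {A : Type}
    (ξ : IK K → A) : Prop :=
  ∃ M : DFAO (PrimeIdeal K) A, ∀ (l : List (PrimeIdeal K)) (a : IK K),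
    (a : Ideal (𝓞 K)) = (l.map Subtype.val).prod → ξ a = M.output l

/-- `v_p(a)`: the largest `e` such that `p^e` divides `a`. -/
def vIdeal {R : Type} [CommRing R] (p a : Ideal R) : ℕ :=
  sSup {e : ℕ | p ^ e ∣ a}

/-- The set `W^a_{O_K}(A)` of automatic Witt vectors. -/
def AutomaticWittSet (K : Type) [Field K] [NumberField K] (A : Type) [CommRing A]
    [Algebra (𝓞 K) A] : Set (IK K → A) :=
  {ξ | ξ ∈ WittSet K A ∧ IsAutomatic ξ}

set_option synthInstance.maxHeartbeats 1000000
set_option maxHeartbeats 2000000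
set_option linter.unusedSectionVars false
set_option linter.unusedVariables false
namespace AutoWitt

variable {K : Type} [Field K] [NumberField K]

/-- Residue field facts: `#k_p = ℓ^f` with `ℓ` prime, `ℓ ∈ p`, and Fermat's little
theorem in `𝓞 K` modulo `p`. -/
theorem residue_facts (p : PrimeIdeal K) :
    ∃ ℓ f : ℕ, ℓ.Prime ∧ residueCard p.1 = ℓ ^ f ∧ ((ℓ : 𝓞 K) ∈ p.1) ∧
      (∀ d : 𝓞 K, d ^ residueCard p.1 - d ∈ p.1) := by
  haveI hmax : p.1.IsMaximal := Ideal.IsPrime.isMaximal p.2.1 p.2.2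
  letI : Field (𝓞 K ⧸ p.1) := Ideal.Quotient.field p.1
  letI : Fintype (𝓞 K ⧸ p.1) := @Fintype.ofFinite _ (Ideal.finiteQuotientOfFreeOfNeBot p.1 p.2.2)
  set ℓ := ringChar (𝓞 K ⧸ p.1) with hℓ
  haveI : CharP (𝓞 K ⧸ p.1) ℓ := ringChar.charP _
  obtain ⟨f, hfp, hcard⟩ := FiniteField.card (𝓞 K ⧸ p.1) ℓ
  have hq : residueCard p.1 = Fintype.card (𝓞 K ⧸ p.1) := Nat.card_eq_fintype_card
  refine ⟨ℓ, f, hfp, by rw [hq, hcard], ?_, ?_⟩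
  · rw [← Ideal.Quotient.eq_zero_iff_mem, map_natCast]
    exact CharP.cast_eq_zero _ ℓ
  · intro d
    rw [← Ideal.Quotient.eq_zero_iff_mem, map_sub, map_pow, hq, FiniteField.pow_card, sub_self]

section Shifts

variable {A : Type} [CommRing A] [Algebra (𝓞 K) A]

theorem shift_add (t : IK K) (ξ η : IK K → A) :
    shift t (ξ + η) = shift t ξ + shift t η := rfl

theorem shift_mul (t : IK K) (ξ η : IK K → A) :
    shift t (ξ * η) = shift t ξ * shift t η := rfl

theorem shift_sub (t : IK K) (ξ η : IK K → A) :
    shift t (ξ - η) = shift t ξ - shift t η := rfl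

theorem shift_pow (t : IK K) (ξ : IK K → A) (m : ℕ) :
    shift t (ξ ^ m) = (shift t ξ) ^ m := rfl

theorem shift_smul (t : IK K) (d : 𝓞 K) (ξ : IK K → A) :
    shift t (d • ξ) = d • shift t ξ := rfl

theorem shift_algebraMap (t : IK K) (c : 𝓞 K) :
    shift t (algebraMap (𝓞 K) (IK K → A) c) = algebraMap (𝓞 K) (IK K → A) c := rfl

theorem shift_shift (s t : IK K) (ξ : IK K → A) :
    shift s (shift t ξ) = shift t (shift s ξ) := by
  funext b
  show ξ (t * (s * b)) = ξ (s * (t * b))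
  rw [mul_left_comm]

/-- The shift as a linear map. -/
def shiftL (t : IK K) : (IK K → A) →ₗ[𝓞 K] (IK K → A) where
  toFun := shift t
  map_add' ξ η := rfl
  map_smul' d ξ := rfl

@[simp] theorem shiftL_apply (t : IK K) (ξ : IK K → A) : shiftL t ξ = shift t ξ := rfl

end Shifts

end AutoWitt
namespace AutoWitt

section Master

variable {K : Type} [Field K] [NumberField K]
variable {A : Type} [CommRing A] [Algebra (𝓞 K) A]

/-- Master structural lemma for the sets `U_n`: the span of `U_n` has `U_n` as its
underlying set (i.e. `U_n` is an `𝓞 K`-submodule), `U_n` contains all constants, is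
closed under multiplication, and is closed under all shift operators. -/
theorem master (n : ℕ) :
    ((Submodule.span (𝓞 K) (UnSet K A n) : Set (IK K → A)) = UnSet K A n)
    ∧ (∀ c : 𝓞 K, algebraMap (𝓞 K) (IK K → A) c ∈ UnSet K A n)
    ∧ (∀ ξ η, ξ ∈ UnSet K A n → η ∈ UnSet K A n → ξ * η ∈ UnSet K A n)
    ∧ (∀ (s : PrimeIdeal K) ξ, ξ ∈ UnSet K A n → shift s.toIK ξ ∈ UnSet K A n) := by
  induction n with
  | zero =>
      refine ⟨?_, fun c => trivial, fun ξ η _ _ => trivial, fun s ξ _ => trivial⟩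
      show ((Submodule.span (𝓞 K) (Set.univ : Set (IK K → A)) : Set (IK K → A)) = Set.univ)
      rw [Submodule.span_univ]; rfl
  | succ n ih =>
      obtain ⟨hspan, hconst, hmul, hshift⟩ := ih
      set N := Submodule.span (𝓞 K) (UnSet K A n) with hN
      have hmemN : ∀ x : IK K → A, x ∈ N ↔ x ∈ UnSet K A n := fun x => by
        constructor
        · intro h; rw [← hspan]; exact h
        · intro h; exact Submodule.subset_span h
      have hUsucc : ∀ ξ : IK K → A, ξ ∈ UnSet K A (n+1) ↔
          (ξ ∈ UnSet K A n ∧ ∀ p : PrimeIdeal K,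
            shift p.toIK ξ - ξ ^ residueCard p.1 ∈ p.1 • N) := fun ξ => Iff.rfl
      -- closure of `UnSet n` under module operations, via `N`
      have haddn : ∀ x y : IK K → A, x ∈ UnSet K A n → y ∈ UnSet K A n →
          x + y ∈ UnSet K A n := fun x y hx hy =>
        (hmemN _).1 (N.add_mem ((hmemN _).2 hx) ((hmemN _).2 hy))
      have hpown : ∀ (x : IK K → A) (k : ℕ), x ∈ UnSet K A n → x ^ k ∈ UnSet K A n := by
        intro x k hx
        induction k with
        | zero => rw [pow_zero, ← map_one (algebraMap (𝓞 K) (IK K → A))]; exact hconst 1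
        | succ k ihk => rw [pow_succ]; exact hmul _ _ ihk hx
      -- absorption of products into `I • N`
      have habs : ∀ (I : Ideal (𝓞 K)) (x y : IK K → A), x ∈ UnSet K A n → y ∈ I • N →
          x * y ∈ I • N := by
        intro I x y hx hy
        refine Submodule.smul_induction_on hy (fun r hr m hm => ?_) (fun a b ha hb => ?_)
        · rw [mul_smul_comm]
          exact Submodule.smul_mem_smul hr ((hmemN _).2 (hmul x m hx ((hmemN _).1 hm)))
        · rw [mul_add]; exact Submodule.add_mem _ ha hb
      have hshiftI : ∀ (s : PrimeIdeal K) (I : Ideal (𝓞 K)) (y : IK K → A), y ∈ I • N →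
          shift s.toIK y ∈ I • N := by
        intro s I y hy
        refine Submodule.smul_induction_on hy (fun r hr m hm => ?_) (fun a b ha hb => ?_)
        · rw [shift_smul]
          exact Submodule.smul_mem_smul hr ((hmemN _).2 (hshift s m ((hmemN _).1 hm)))
        · rw [shift_add]; exact Submodule.add_mem _ ha hb
      have hnat : ∀ (m : ℕ) (z : IK K → A), z ∈ N → (m : IK K → A) * z ∈ N := by
        intro m z hz
        have h : (m : IK K → A) * z = (m : 𝓞 K) • z := by
          rw [Algebra.smul_def, map_natCast]
        rw [h]; exact N.smul_mem _ hz
      -- constants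
      have hconst' : ∀ c : 𝓞 K, algebraMap (𝓞 K) (IK K → A) c ∈ UnSet K A (n+1) := by
        intro c
        refine (hUsucc _).2 ⟨hconst c, fun p => ?_⟩
        obtain ⟨ℓ, f, hℓ, hqcard, hℓp, hferm⟩ := residue_facts p
        have h1 : shift p.toIK (algebraMap (𝓞 K) (IK K → A) c)
            - (algebraMap (𝓞 K) (IK K → A) c) ^ residueCard p.1
            = (c - c ^ residueCard p.1) • (1 : IK K → A) := by
          rw [shift_algebraMap, ← map_pow, ← map_sub, Algebra.algebraMap_eq_smul_one]
        rw [h1]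
        refine Submodule.smul_mem_smul ?_ ((hmemN _).2 ?_)
        · have := p.1.neg_mem (hferm c)
          simpa using this
        · rw [← map_one (algebraMap (𝓞 K) (IK K → A))]; exact hconst 1
      have hzero' : (0 : IK K → A) ∈ UnSet K A (n+1) := by
        have := hconst' 0; simpa using this
      -- addition
      have hadd' : ∀ ξ η : IK K → A, ξ ∈ UnSet K A (n+1) → η ∈ UnSet K A (n+1) →
          ξ + η ∈ UnSet K A (n+1) := by
        intro ξ η hξ hη
        obtain ⟨hξn, hξp⟩ := (hUsucc ξ).1 hξ
        obtain ⟨hηn, hηp⟩ := (hUsucc η).1 hη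
        refine (hUsucc _).2 ⟨haddn _ _ hξn hηn, fun p => ?_⟩
        obtain ⟨ℓ, f, hℓ, hqcard, hℓp, hferm⟩ := residue_facts p
        have hcomm := add_pow_prime_pow_eq hℓ ξ η f
        rw [← hqcard] at hcomm
        have key : shift p.toIK (ξ + η) - (ξ + η) ^ residueCard p.1
            = (shift p.toIK ξ - ξ ^ residueCard p.1)
              + (shift p.toIK η - η ^ residueCard p.1)
              - (ℓ : IK K → A) * ∑ k ∈ Finset.Ioo 0 (residueCard p.1),
                  ξ ^ k * η ^ (residueCard p.1 - k) * ((residueCard p.1).choose k / ℓ : ℕ) := by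
          have hsum : ξ * (η * ∑ k ∈ Finset.Ioo 0 (residueCard p.1),
              ξ ^ (k - 1) * η ^ (residueCard p.1 - k - 1) * ((residueCard p.1).choose k / ℓ : ℕ))
              = ∑ k ∈ Finset.Ioo 0 (residueCard p.1),
                ξ ^ k * η ^ (residueCard p.1 - k) * ((residueCard p.1).choose k / ℓ : ℕ) := by
            rw [Finset.mul_sum, Finset.mul_sum]
            refine Finset.sum_congr rfl fun k hk => ?_
            obtain ⟨hk1, hk2⟩ := Finset.mem_Ioo.1 hk
            rw [show ξ ^ k = ξ ^ (k - 1) * ξ by rw [← pow_succ, Nat.sub_add_cancel hk1],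
              show η ^ (residueCard p.1 - k) = η ^ (residueCard p.1 - k - 1) * η by
                rw [← pow_succ, Nat.sub_add_cancel (by omega)]]
            ring
          rw [shift_add, hcomm, ← hsum]; ring
        rw [key]
        refine Submodule.sub_mem _ (Submodule.add_mem _ (hξp p) (hηp p)) ?_
        have hSN : (∑ k ∈ Finset.Ioo 0 (residueCard p.1),
            ξ ^ k * η ^ (residueCard p.1 - k) * ((residueCard p.1).choose k / ℓ : ℕ)) ∈ N := by
          refine Submodule.sum_mem _ (fun k hk => ?_)
          have t1 : ξ ^ k * η ^ (residueCard p.1 - k) ∈ UnSet K A n :=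
            hmul _ _ (hpown _ _ hξn) (hpown _ _ hηn)
          rw [mul_comm]
          exact hnat _ _ ((hmemN _).2 t1)
        have hsm : (ℓ : IK K → A) * ∑ k ∈ Finset.Ioo 0 (residueCard p.1),
            ξ ^ k * η ^ (residueCard p.1 - k) * ((residueCard p.1).choose k / ℓ : ℕ)
            = (ℓ : 𝓞 K) • ∑ k ∈ Finset.Ioo 0 (residueCard p.1),
            ξ ^ k * η ^ (residueCard p.1 - k) * ((residueCard p.1).choose k / ℓ : ℕ) := by
          rw [Algebra.smul_def, map_natCast]
        rw [hsm]
        exact Submodule.smul_mem_smul hℓp hSN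
      -- scalar multiplication
      have hsmul' : ∀ (d : 𝓞 K) (ξ : IK K → A), ξ ∈ UnSet K A (n+1) →
          d • ξ ∈ UnSet K A (n+1) := by
        intro d ξ hξ
        obtain ⟨hξn, hξp⟩ := (hUsucc ξ).1 hξ
        refine (hUsucc _).2 ⟨(hmemN _).1 (N.smul_mem d ((hmemN _).2 hξn)), fun p => ?_⟩
        obtain ⟨ℓ, f, hℓ, hqcard, hℓp, hferm⟩ := residue_facts p
        have key : shift p.toIK (d • ξ) - (d • ξ) ^ residueCard p.1
            = d • (shift p.toIK ξ - ξ ^ residueCard p.1)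
              + (d - d ^ residueCard p.1) • ξ ^ residueCard p.1 := by
          rw [shift_smul, smul_pow, smul_sub, sub_smul]; abel
        rw [key]
        refine Submodule.add_mem _ (Submodule.smul_mem _ d (hξp p)) ?_
        refine Submodule.smul_mem_smul ?_ ((hmemN _).2 (hpown _ _ hξn))
        have := p.1.neg_mem (hferm d)
        simpa using this
      -- multiplication
      have hmul' : ∀ ξ η : IK K → A, ξ ∈ UnSet K A (n+1) → η ∈ UnSet K A (n+1) →
          ξ * η ∈ UnSet K A (n+1) := by
        intro ξ η hξ hη
        obtain ⟨hξn, hξp⟩ := (hUsucc ξ).1 hξ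
        obtain ⟨hηn, hηp⟩ := (hUsucc η).1 hη
        refine (hUsucc _).2 ⟨hmul _ _ hξn hηn, fun p => ?_⟩
        have key : shift p.toIK (ξ * η) - (ξ * η) ^ residueCard p.1
            = shift p.toIK η * (shift p.toIK ξ - ξ ^ residueCard p.1)
              + ξ ^ residueCard p.1 * (shift p.toIK η - η ^ residueCard p.1) := by
          rw [shift_mul, mul_pow]; ring
        rw [key]
        exact Submodule.add_mem _
          (habs _ _ _ (hshift p η hηn) (hξp p))
          (habs _ _ _ (hpown _ _ hξn) (hηp p))
      -- shifts
      have hshift' : ∀ (s : PrimeIdeal K) (ξ : IK K → A), ξ ∈ UnSet K A (n+1) →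
          shift s.toIK ξ ∈ UnSet K A (n+1) := by
        intro s ξ hξ
        obtain ⟨hξn, hξp⟩ := (hUsucc ξ).1 hξ
        refine (hUsucc _).2 ⟨hshift s ξ hξn, fun p => ?_⟩
        have key : shift p.toIK (shift s.toIK ξ) - (shift s.toIK ξ) ^ residueCard p.1
            = shift s.toIK (shift p.toIK ξ - ξ ^ residueCard p.1) := by
          rw [shift_sub, shift_pow, shift_shift]
        rw [key]
        exact hshiftI s p.1 _ (hξp p)
      -- the span statement
      refine ⟨?_, hconst', hmul', hshift'⟩
      let S' : Submodule (𝓞 K) (IK K → A) :=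
        { carrier := UnSet K A (n+1)
          add_mem' := fun {x y} hx hy => hadd' x y hx hy
          zero_mem' := hzero'
          smul_mem' := fun d x hx => hsmul' d x hx }
      have h1 : Submodule.span (𝓞 K) (UnSet K A (n+1)) = S' := by
        have : (S' : Set (IK K → A)) = UnSet K A (n+1) := rfl
        rw [← this, Submodule.span_eq]
      rw [h1]
      rfl

end Master

end AutoWitt
namespace AutoWitt

section WittProps

variable {K : Type} [Field K] [NumberField K]
variable {A : Type} [CommRing A] [Algebra (𝓞 K) A]

theorem mem_wittSet_iff {ξ : IK K → A} : ξ ∈ WittSet K A ↔ ∀ n, ξ ∈ UnSet K A n :=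
  Set.mem_iInter

theorem wittSet_const (c : 𝓞 K) : algebraMap (𝓞 K) (IK K → A) c ∈ WittSet K A :=
  mem_wittSet_iff.2 fun n => (master n).2.1 c

theorem wittSet_add {ξ η : IK K → A} (hξ : ξ ∈ WittSet K A) (hη : η ∈ WittSet K A) :
    ξ + η ∈ WittSet K A := by
  refine mem_wittSet_iff.2 fun n => ?_
  obtain ⟨hspan, -, -, -⟩ := master (K := K) (A := A) n
  have h : ξ + η ∈ Submodule.span (𝓞 K) (UnSet K A n) :=
    Submodule.add_mem _ (Submodule.subset_span (mem_wittSet_iff.1 hξ n))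
      (Submodule.subset_span (mem_wittSet_iff.1 hη n))
  rw [← hspan]; exact h

theorem wittSet_mul {ξ η : IK K → A} (hξ : ξ ∈ WittSet K A) (hη : η ∈ WittSet K A) :
    ξ * η ∈ WittSet K A :=
  mem_wittSet_iff.2 fun n =>
    (master n).2.2.1 ξ η (mem_wittSet_iff.1 hξ n) (mem_wittSet_iff.1 hη n)

theorem wittSet_shift {ξ : IK K → A} (hξ : ξ ∈ WittSet K A) (s : PrimeIdeal K) :
    shift s.toIK ξ ∈ WittSet K A :=
  mem_wittSet_iff.2 fun n => (master n).2.2.2 s ξ (mem_wittSet_iff.1 hξ n)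

theorem wittSet_frob {ζ : IK K → A} (hζ : ζ ∈ WittSet K A) (p : PrimeIdeal K) (n : ℕ) :
    shift p.toIK ζ - ζ ^ residueCard p.1 ∈
      p.1 • Submodule.span (𝓞 K) (UnSet K A n) :=
  ((mem_wittSet_iff.1 hζ (n+1)).2 p : _)

end WittProps

section Automata

variable {K : Type} [Field K] [NumberField K]
variable {A : Type}

theorem isAutomatic_const (v : A) : IsAutomatic (fun _ : IK K => v) := by
  refine ⟨⟨PUnit, fun s _ => s, PUnit.unit, fun _ => v⟩, fun l a _ => ?_⟩
  rfl

theorem isAutomatic_map {ξ : IK K → A} (hξ : IsAutomatic ξ) (g : A → A) :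
    IsAutomatic (fun a => g (ξ a)) := by
  obtain ⟨M, hM⟩ := hξ
  letI := M.finState
  refine ⟨⟨M.State, M.trans, M.start, fun s => g (M.out s)⟩, fun l a ha => ?_⟩
  have := hM l a ha
  show g (ξ a) = g (M.out (l.foldl M.trans M.start))
  rw [this]; rfl

private theorem foldl_pair {Δ S T : Type} (f : S → Δ → S) (g : T → Δ → T)
    (l : List Δ) (s : S) (t : T) :
    l.foldl (fun q d => (f q.1 d, g q.2 d)) (s, t) = (l.foldl f s, l.foldl g t) := by
  induction l generalizing s t with
  | nil => rfl
  | cons d l ih => simpa using ih (f s d) (g t d)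

theorem isAutomatic_map₂ {ξ η : IK K → A} (hξ : IsAutomatic ξ) (hη : IsAutomatic η)
    (g : A → A → A) : IsAutomatic (fun a => g (ξ a) (η a)) := by
  obtain ⟨M, hM⟩ := hξ
  obtain ⟨N', hN⟩ := hη
  letI := M.finState
  letI := N'.finState
  refine ⟨⟨M.State × N'.State, fun q d => (M.trans q.1 d, N'.trans q.2 d),
      (M.start, N'.start), fun q => g (M.out q.1) (N'.out q.2)⟩, fun l a ha => ?_⟩
  show g (ξ a) (η a) = _
  rw [hM l a ha, hN l a ha]
  show g _ _ = g (M.out (l.foldl (fun q d => (M.trans q.1 d, N'.trans q.2 d))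
      (M.start, N'.start)).1) (N'.out (l.foldl _ (M.start, N'.start)).2)
  rw [foldl_pair M.trans N'.trans l M.start N'.start]
  rfl

theorem isAutomatic_add [Add A] {ξ η : IK K → A} (hξ : IsAutomatic ξ) (hη : IsAutomatic η) :
    IsAutomatic (ξ + η) :=
  isAutomatic_map₂ hξ hη (· + ·)

theorem isAutomatic_mul [Mul A] {ξ η : IK K → A} (hξ : IsAutomatic ξ) (hη : IsAutomatic η) :
    IsAutomatic (ξ * η) :=
  isAutomatic_map₂ hξ hη (· * ·)

theorem isAutomatic_sub [Sub A] {ξ η : IK K → A} (hξ : IsAutomatic ξ) (hη : IsAutomatic η) :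
    IsAutomatic (ξ - η) :=
  isAutomatic_map₂ hξ hη (· - ·)

theorem isAutomatic_pow [Monoid A] {ξ : IK K → A} (hξ : IsAutomatic ξ) (m : ℕ) :
    IsAutomatic (ξ ^ m) :=
  isAutomatic_map hξ (· ^ m)

theorem isAutomatic_shift {ξ : IK K → A} (hξ : IsAutomatic ξ) (p : PrimeIdeal K) :
    IsAutomatic (shift p.toIK ξ) := by
  obtain ⟨M, hM⟩ := hξ
  letI := M.finState
  refine ⟨⟨M.State, M.trans, M.trans M.start p, M.out⟩, fun l a ha => ?_⟩
  have key : ((p.toIK * a : IK K) : Ideal (𝓞 K)) = ((p :: l).map Subtype.val).prod := by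
    show (p.1 * (a : Ideal (𝓞 K)) : Ideal (𝓞 K)) = _
    show p.1 * (a : Ideal (𝓞 K)) = p.1 * (l.map Subtype.val).prod
    rw [ha]
  have := hM (p :: l) (p.toIK * a) key
  show ξ (p.toIK * a) = _
  rw [this]
  rfl

end Automata

end AutoWitt
namespace AutoWitt

section Scaled

variable {K : Type} [Field K] [NumberField K]

end Scaled

/-- Abbreviation for the algebraic closure of `K`. -/
abbrev Lbar (K : Type) [Field K] [NumberField K] : Type := AlgebraicClosure K

/-- Abbreviation for `O_K̄`, the integral closure of `𝓞 K` in the algebraic closure. -/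
abbrev Ab (K : Type) [Field K] [NumberField K] : Type :=
  ↥(integralClosure (𝓞 K) (AlgebraicClosure K))

section Scaled2

variable {K : Type} [Field K] [NumberField K]

local notation "L" => Lbar K
local notation "Ab" => Ab K

theorem scale_mem' {p : Ideal (𝓞 K)} {c : K}
    (hc : ∀ u ∈ p, ∃ d : 𝓞 K, algebraMap (𝓞 K) K d = c * algebraMap (𝓞 K) K u)
    (M : Submodule (𝓞 K) (IK K → Ab)) {η : IK K → Ab} (hη : η ∈ p • M) :
    ∃ θ ∈ M, ∀ a : IK K, (θ a : L) = c • ((η a : L)) := by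
  refine Submodule.smul_induction_on hη (fun r hr m hm => ?_) (fun x y hx hy => ?_)
  · obtain ⟨d, hd⟩ := hc r hr
    refine ⟨d • m, M.smul_mem d hm, fun a => ?_⟩
    show ((d • m a : Ab) : L) = c • (((r • m a : Ab)) : L)
    have h1 : ((d • m a : Ab) : L) = d • ((m a : L)) := rfl
    have h2 : ((r • m a : Ab) : L) = r • ((m a : L)) := rfl
    rw [h1]
    refine (algebraMap_smul K d ((m a : L))).symm.trans ?_
    rw [hd, mul_smul]
    congr 1
  · obtain ⟨θ₁, h₁, e₁⟩ := hx
    obtain ⟨θ₂, h₂, e₂⟩ := hy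
    refine ⟨θ₁ + θ₂, M.add_mem h₁ h₂, fun a => ?_⟩
    show ((θ₁ a + θ₂ a : Ab) : L) = c • ((x a + y a : Ab) : L)
    rw [Subalgebra.coe_add, Subalgebra.coe_add, smul_add, e₁ a, e₂ a]

theorem scaled_frob {p : PrimeIdeal K} {c : K}
    (hc : ∀ u ∈ p.1, ∃ d : 𝓞 K, algebraMap (𝓞 K) K d = c * algebraMap (𝓞 K) K u)
    {η : IK K → Ab}
    (hη : ∀ n : ℕ, η ∈ p.1 • Submodule.span (𝓞 K) (UnSet K Ab n))
    (hauto : IsAutomatic η) :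
    ∃ θ : IK K → Ab, θ ∈ WittSet K Ab ∧ IsAutomatic θ ∧
      ∀ a, ((θ a : L)) = c • ((η a : L)) := by
  obtain ⟨θ, hθ0, hcoe⟩ := scale_mem' hc (Submodule.span (𝓞 K) (UnSet K Ab 0)) (hη 0)
  have hW : θ ∈ WittSet K Ab := by
    refine mem_wittSet_iff.2 fun n => ?_
    obtain ⟨ξ, hξM, hξeq⟩ := scale_mem' hc (Submodule.span (𝓞 K) (UnSet K Ab n)) (hη n)
    have hxθ : ξ = θ := by
      funext a
      exact Subtype.coe_injective ((hξeq a).trans (hcoe a).symm)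
    rw [← (master n).1]
    exact hxθ ▸ hξM
  have hA : IsAutomatic θ := by
    classical
    have hθg : θ = fun a =>
        (fun x : Ab => if h : ∃ t : Ab, (t : L) = c • ((x : L)) then h.choose else 0) (η a) := by
      funext a
      have hex : ∃ t : Ab, (t : L) = c • ((η a : L)) := ⟨θ a, hcoe a⟩
      simp only [dif_pos hex]
      exact (Subtype.coe_injective (hex.choose_spec.trans (hcoe a).symm)).symm
    rw [hθg]
    exact isAutomatic_map hauto
      (fun x : Ab => if h : ∃ t : Ab, (t : L) = c • ((x : L)) then h.choose else 0)
  exact ⟨θ, hW, hA, hcoe⟩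

theorem frob_mem {ζ : IK K → Ab} (hζ : ζ ∈ AutomaticWittSet K Ab) (p : PrimeIdeal K) :
    shift p.toIK ζ - ζ ^ residueCard p.1 ∈ idealMulSet p.1 (AutomaticWittSet K Ab) := by
  obtain ⟨hζW, hζA⟩ := hζ
  set η := shift p.toIK ζ - ζ ^ residueCard p.1 with hηdef
  have hηn : ∀ n, η ∈ p.1 • Submodule.span (𝓞 K) (UnSet K Ab n) := wittSet_frob hζW p
  have hηauto : IsAutomatic η :=
    isAutomatic_sub (isAutomatic_shift hζA p) (isAutomatic_pow hζA _)
  obtain ⟨a₀, ha₀p, ha₀⟩ := (Submodule.ne_bot_iff _).1 p.2.2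
  have hdvd : p.1 ∣ Ideal.span {a₀} :=
    Ideal.dvd_iff_le.2 (by rwa [Ideal.span_le, Set.singleton_subset_iff])
  obtain ⟨b, hb⟩ := hdvd
  have ha₀K : algebraMap (𝓞 K) K a₀ ≠ 0 :=
    (map_ne_zero_iff _ (IsFractionRing.injective (𝓞 K) K)).2 ha₀
  have hgood : ∀ v ∈ b, ∀ u ∈ p.1, ∃ d : 𝓞 K,
      algebraMap (𝓞 K) K d
        = (algebraMap (𝓞 K) K v / algebraMap (𝓞 K) K a₀) * algebraMap (𝓞 K) K u := by
    intro v hv u hu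
    have hmem : v * u ∈ Ideal.span {a₀} := by
      rw [hb, mul_comm v u]
      exact Ideal.mul_mem_mul hu hv
    obtain ⟨d, hd⟩ := Ideal.mem_span_singleton'.1 hmem
    refine ⟨d, ?_⟩
    have := congrArg (algebraMap (𝓞 K) K) hd
    rw [map_mul, map_mul] at this
    rw [div_mul_eq_mul_div, eq_div_iff ha₀K]
    exact this
  have hQ : ∀ x ∈ p.1 * b, ∃ θ : IK K → Ab,
      θ ∈ p.1 • Submodule.span (𝓞 K) (AutomaticWittSet K Ab) ∧
      ∀ a, ((θ a : L)) = (algebraMap (𝓞 K) K x / algebraMap (𝓞 K) K a₀) • ((η a : L)) := by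
    intro x hx
    refine Submodule.mul_induction_on hx ?_ ?_
    · intro u hu v hv
      obtain ⟨θ, hθW, hθauto, hθeq⟩ := scaled_frob (hgood v hv) hηn hηauto
      refine ⟨u • θ, Submodule.smul_mem_smul hu (Submodule.subset_span ⟨hθW, hθauto⟩),
        fun a => ?_⟩
      have h1 : (((u • θ) a : Ab) : L) = u • ((θ a : L)) :=
        ((integralClosure (𝓞 K) (AlgebraicClosure K)).val.toLinearMap).map_smul u (θ a)
      rw [h1, hθeq a, map_mul, mul_div_assoc, mul_smul, algebraMap_smul]
      rfl
    · rintro x y ⟨θ₁, h₁, e₁⟩ ⟨θ₂, h₂, e₂⟩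
      refine ⟨θ₁ + θ₂, Submodule.add_mem _ h₁ h₂, fun a => ?_⟩
      show ((θ₁ a + θ₂ a : Ab) : L) = _
      rw [Subalgebra.coe_add, e₁ a, e₂ a, map_add, add_div, add_smul]
  have ha₀mem : a₀ ∈ p.1 * b := by
    rw [← hb]
    exact Submodule.mem_span_singleton_self a₀
  obtain ⟨θ, hθmem, hθeq⟩ := hQ a₀ ha₀mem
  have hθη : θ = η := by
    funext a
    refine Subtype.coe_injective ?_
    show (θ a : L) = (η a : L)
    rw [hθeq a, div_self ha₀K, one_smul]
  exact hθη ▸ hθmem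

end Scaled2

end AutoWitt
/-- the automatic Witt vectors `W^a = W^a_{O_K}(O_K̄)` form a sub-Λ-ring
of `W_{O_K}(O_K̄)`: `W^a` contains all constant vectors (the image of the structure
map), is closed under addition and multiplication, is closed under all shift operators
`ψ_p`, and satisfies `ψ_p ζ - ζ^{#k_p} ∈ p·W^a` for all `ζ ∈ W^a` and `p ∈ P_K`. -/
theorem automatic_witt_sub_lambda_ring (K : Type) [Field K] [NumberField K] :
    (∀ c : 𝓞 K,
      algebraMap (𝓞 K) (IK K → ↥(integralClosure (𝓞 K) (AlgebraicClosure K))) c ∈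
        AutomaticWittSet K ↥(integralClosure (𝓞 K) (AlgebraicClosure K))) ∧
    (∀ ξ η : IK K → ↥(integralClosure (𝓞 K) (AlgebraicClosure K)),
      ξ ∈ AutomaticWittSet K ↥(integralClosure (𝓞 K) (AlgebraicClosure K)) →
      η ∈ AutomaticWittSet K ↥(integralClosure (𝓞 K) (AlgebraicClosure K)) →
      ξ + η ∈ AutomaticWittSet K ↥(integralClosure (𝓞 K) (AlgebraicClosure K)) ∧
      ξ * η ∈ AutomaticWittSet K ↥(integralClosure (𝓞 K) (AlgebraicClosure K))) ∧
    (∀ ξ : IK K → ↥(integralClosure (𝓞 K) (AlgebraicClosure K)),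
      ξ ∈ AutomaticWittSet K ↥(integralClosure (𝓞 K) (AlgebraicClosure K)) →
      ∀ p : PrimeIdeal K,
        shift p.toIK ξ ∈
          AutomaticWittSet K ↥(integralClosure (𝓞 K) (AlgebraicClosure K))) ∧
    (∀ ζ : IK K → ↥(integralClosure (𝓞 K) (AlgebraicClosure K)),
      ζ ∈ AutomaticWittSet K ↥(integralClosure (𝓞 K) (AlgebraicClosure K)) →
      ∀ p : PrimeIdeal K,
        shift p.toIK ζ - ζ ^ residueCard p.1 ∈
          idealMulSet p.1
            (AutomaticWittSet K ↥(integralClosure (𝓞 K) (AlgebraicClosure K)))) := by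
  refine ⟨?_, ?_, ?_, ?_⟩
  · intro c
    refine ⟨AutoWitt.wittSet_const c, ?_⟩
    have h : algebraMap (𝓞 K) (IK K → ↥(integralClosure (𝓞 K) (AlgebraicClosure K))) c
        = fun _ => algebraMap (𝓞 K) ↥(integralClosure (𝓞 K) (AlgebraicClosure K)) c := rfl
    rw [h]
    exact AutoWitt.isAutomatic_const _
  · intro ξ η hξ hη
    exact ⟨⟨AutoWitt.wittSet_add hξ.1 hη.1, AutoWitt.isAutomatic_add hξ.2 hη.2⟩,
      ⟨AutoWitt.wittSet_mul hξ.1 hη.1, AutoWitt.isAutomatic_mul hξ.2 hη.2⟩⟩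
  · intro ξ hξ p
    exact ⟨AutoWitt.wittSet_shift hξ.1 p, AutoWitt.isAutomatic_shift hξ.2 p⟩
  · intro ζ hζ p
    exact AutoWitt.frob_mem hζ p

end
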